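/- Let K be an algebraic number field of class number one, of degree l over ℚ, and assume the abc conjecture for K. Let η be a unit in O_K satisfying |η| > 1 and |η^(j)| < 1 for all j ≠ 1, where η^(1) = η, η^(2), …, η^(l) are the conjugates of η under the l embeddings of K into ℂ. Then there exist infinitely many non-Wieferich primes in O_K with respect to the base η, i.e., the set of prime elements π of O_K with η^(N(π)−1) ≢ 1 (mod π²) is infinite. -/

import Mathlib

open NumberField IsDedekindDomain Filter
open scoped Classical

variable (K : Type*) [Field K] [NumberField K]

/-- The absolute value of the norm `N_{K/ℚ}` of an algebraic integer, as a natural number. -/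
noncomputable def absNormElem (x : 𝓞 K) : ℕ := (Algebra.norm ℤ x).natAbs

/-- `v_𝔭(p)`: the ramification index of the prime ideal `𝔭 = v.asIdeal` over the rational
prime `p` lying below it (`pℤ = 𝔭 ∩ ℤ`). -/
noncomputable def ramIdxOverQ (v : HeightOneSpectrum (𝓞 K)) : ℕ :=
  Ideal.ramificationIdx'
    (Ideal.comap (algebraMap ℤ (𝓞 K)) v.asIdeal) v.asIdeal

/-- `‖x‖_v = N(𝔭)^(−v_𝔭(x))` for a finite place `v`, with `‖0‖_v = 0`. -/
noncomputable def normAtFin (v : HeightOneSpectrum (𝓞 K)) (x : K) : ℝ :=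
  if h : v.valuation K x = 0 then 0
  else (Ideal.absNorm v.asIdeal : ℝ) ^ (Multiplicative.toAdd (WithZero.unzero h))

/-- `‖x‖_w = |g(x)|^e` for an archimedean place `w`, where `e = 1` if `w` is real and
`e = 2` if `w` is complex. -/
noncomputable def normAtInf (w : InfinitePlace K) (x : K) : ℝ := (w x) ^ w.mult

/-- The height `H_K(a,b,c) = ∏_v max(‖a‖_v, ‖b‖_v, ‖c‖_v)`, the product running over all
(finite and infinite) places of `K`. -/
noncomputable def heightK (a b c : K) : ℝ :=
  (∏ᶠ v : HeightOneSpectrum (𝓞 K),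
      max (max (normAtFin K v a) (normAtFin K v b)) (normAtFin K v c)) *
  ∏ w : InfinitePlace K,
      max (max (normAtInf K w a) (normAtInf K w b)) (normAtInf K w c)

/-- The radical `rad_K(a,b,c) = ∏_{𝔭 ∈ I_K(a,b,c)} N(𝔭)^(v_𝔭(p))`, where `I_K(a,b,c)` is the
set of prime ideals of `𝓞 K` at which `‖a‖_v, ‖b‖_v, ‖c‖_v` are not all equal. -/
noncomputable def radK (a b c : K) : ℝ :=
  ∏ᶠ v : HeightOneSpectrum (𝓞 K),
    if normAtFin K v a = normAtFin K v b ∧ normAtFin K v b = normAtFin K v c then 1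
    else (Ideal.absNorm v.asIdeal : ℝ) ^ (ramIdxOverQ K v)

/-- The abc conjecture for the number field `K`: for every `δ > 0` there is a constant
`C(K,δ)` such that `H_K(a,b,c) ≤ C(K,δ) · rad_K(a,b,c)^(1+δ)` for all nonzero
`a, b, c ∈ K` with `a + b + c = 0`. -/
noncomputable def AbcConjecture : Prop :=
  ∀ δ : ℝ, 0 < δ → ∃ C : ℝ, 0 < C ∧ ∀ a b c : K, a ≠ 0 → b ≠ 0 → c ≠ 0 →
    a + b + c = 0 → heightK K a b c ≤ C * (radK K a b c) ^ (1 + δ)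

open scoped nonZeroDivisors

set_option maxHeartbeats 1000000
set_option synthInstance.maxHeartbeats 400000

/-! ### Auxiliary lemmas -/

section Aux

variable {K}

lemma NW_lemA {R : Type*} [CommRing R] [IsDomain R] (π α : R) (hπ : Prime π)
    (hα : π ∣ α - 1) (M : ℕ) (hM : ¬ π ∣ (M : R)) (h2 : π ^ 2 ∣ α ^ M - 1) :
    π ^ 2 ∣ α - 1 := by
  obtain ⟨u, hu⟩ := hα
  set S : R := ∑ i ∈ Finset.range M, α ^ i with hS
  have hgeom : α ^ M - 1 = (α - 1) * S := by
    rw [hS, mul_comm]; exact (geom_sum_mul α M).symm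
  have hπS : ¬ π ∣ S := by
    intro hdvd
    apply hM
    have hSM : π ∣ S - (M : R) := by
      have he : S - (M : R) = ∑ i ∈ Finset.range M, (α ^ i - 1) := by
        rw [hS, Finset.sum_sub_distrib, Finset.sum_const, Finset.card_range]
        simp [nsmul_eq_mul]
      rw [he]
      refine Finset.dvd_sum fun i _ => ?_
      refine dvd_trans ⟨u, hu⟩ ?_
      have := sub_dvd_pow_sub_pow α 1 i
      simpa using this
    have := dvd_sub hdvd hSM
    simpa using this
  obtain ⟨t, ht⟩ := h2
  rw [hgeom, hu] at ht
  have hcancel : u * S = π * t := by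
    apply mul_left_cancel₀ hπ.ne_zero
    rw [← mul_assoc, ht]; ring
  rcases hπ.2.2 _ _ ⟨t, hcancel⟩ with h | h
  · obtain ⟨w, hw⟩ := h
    exact ⟨w, by rw [hu, hw]; ring⟩
  · exact absurd h hπS

end Aux

variable {K}

lemma NW_one_le_prod_real {ι : Type*} {s : Finset ι} {g : ι → ℝ} (h : ∀ i ∈ s, 1 ≤ g i) :
    1 ≤ ∏ i ∈ s, g i := by
  calc (1:ℝ) = ∏ _i ∈ s, 1 := by simp
  _ ≤ ∏ i ∈ s, g i := Finset.prod_le_prod (by intros; norm_num) h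

lemma NW_pidvd (π : 𝓞 K) (hπ : π ≠ 0) (M : ℕ) (h : π ∣ ((M : ℕ) : 𝓞 K)) :
    absNormElem K π ∣ M ^ Module.finrank ℤ (𝓞 K) := by
  have hcast : ((M : ℕ) : 𝓞 K) = algebraMap ℤ (𝓞 K) ((M : ℕ) : ℤ) := by push_cast; ring
  have hnorm : (Algebra.norm ℤ π) ∣ ((M : ℤ) ^ Module.finrank ℤ (𝓞 K)) := by
    have h2 := map_dvd (Algebra.norm ℤ) h
    rw [Module.finrank_eq_card_chooseBasisIndex ℤ (𝓞 K)]
    rwa [hcast, Algebra.norm_algebraMap_of_basis (Module.Free.chooseBasis ℤ (𝓞 K))] at h2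
  have := Int.natAbs_dvd_natAbs.mpr hnorm
  simpa [absNormElem, Int.natAbs_pow] using this

/-- The key consequence of the (assumed-for-contradiction) Wieferich property of a prime `π`:
if `π ∣ η^n - 1` then in fact `π^2 ∣ η^n - 1`. -/
lemma NW_core (π : 𝓞 K) (hπ : Prime π) (η : (𝓞 K)ˣ)
    (hW : π ^ 2 ∣ (η : 𝓞 K) ^ (absNormElem K π - 1) - 1)
    (n : ℕ) (hdvd : π ∣ (η : 𝓞 K) ^ n - 1) :
    π ^ 2 ∣ (η : 𝓞 K) ^ n - 1 := by
  set I : Ideal (𝓞 K) := Ideal.span {π} with hI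
  set q : ℕ := absNormElem K π with hq
  have hspan : q = Ideal.absNorm I := by rw [hq, hI, Ideal.absNorm_span_singleton, absNormElem]
  have hIbot : I ≠ ⊥ := by simpa [hI, Ideal.span_singleton_eq_bot] using hπ.ne_zero
  have hq0 : q ≠ 0 := by
    rw [hspan]; simpa [Ideal.absNorm_eq_zero_iff] using hIbot
  have hq1 : q ≠ 1 := by
    rw [hspan]
    simp only [Ne, Ideal.absNorm_eq_one_iff, hI, Ideal.span_singleton_eq_top]
    exact hπ.not_unit
  have hq2 : 2 ≤ q := by omega
  have hmem : ∀ x : 𝓞 K, π ∣ x ↔ Ideal.Quotient.mk I x = 0 := fun x => by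
    rw [Ideal.Quotient.eq_zero_iff_mem, hI, Ideal.mem_span_singleton]
  set ub : ((𝓞 K) ⧸ I)ˣ := Units.map (Ideal.Quotient.mk I).toMonoidHom η with hub
  have hubval : (ub : (𝓞 K) ⧸ I) = Ideal.Quotient.mk I (η : 𝓞 K) := rfl
  have hpow : ∀ k : ℕ, (π ∣ (η : 𝓞 K) ^ k - 1) ↔ ub ^ k = 1 := by
    intro k
    rw [hmem, map_sub, map_pow, map_one, sub_eq_zero, eq_comm]
    constructor
    · intro h; ext; rw [Units.val_pow_eq_pow_val, hubval, Units.val_one, ← h]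
    · intro h
      have h2 := congrArg (Units.val) h
      rw [Units.val_pow_eq_pow_val, hubval, Units.val_one] at h2
      rw [h2]
  set d : ℕ := Nat.gcd n (q - 1) with hd
  have hdn : d ∣ n := Nat.gcd_dvd_left _ _
  have hdq : d ∣ q - 1 := Nat.gcd_dvd_right _ _
  have hubq : ub ^ (q - 1) = 1 := (hpow (q - 1)).mp ((dvd_pow_self π two_ne_zero).trans hW)
  have hubd : ub ^ d = 1 := by
    have h1 : orderOf ub ∣ n := orderOf_dvd_of_pow_eq_one ((hpow n).mp hdvd)
    have h2 : orderOf ub ∣ q - 1 := orderOf_dvd_of_pow_eq_one hubq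
    exact orderOf_dvd_iff_pow_eq_one.mp (Nat.dvd_gcd h1 h2)
  have hπd : π ∣ (η : 𝓞 K) ^ d - 1 := (hpow d).mpr hubd
  set M : ℕ := (q - 1) / d with hM
  have hdM : q - 1 = d * M := by rw [hM, Nat.mul_div_cancel' hdq]
  have hπM : ¬ π ∣ ((M : ℕ) : 𝓞 K) := by
    intro h
    have hqM : q ∣ M ^ Module.finrank ℤ (𝓞 K) := hq ▸ NW_pidvd π hπ.ne_zero M h
    have hp := Nat.minFac_prime hq1
    have hpM : q.minFac ∣ M := hp.dvd_of_dvd_pow ((Nat.minFac_dvd q).trans hqM)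
    have hMq1 : M ∣ q - 1 := ⟨d, by rw [hdM, Nat.mul_comm]⟩
    have hpq1 : q.minFac ∣ q - 1 := hpM.trans hMq1
    have hone : q.minFac ∣ 1 := by
      have := Nat.dvd_sub (Nat.minFac_dvd q) hpq1
      rwa [Nat.sub_sub_self (by omega)] at this
    exact Nat.Prime.one_lt hp |>.ne' (Nat.dvd_one.mp hone)
  have hW2 : π ^ 2 ∣ ((η : 𝓞 K) ^ d) ^ M - 1 := by
    rw [← pow_mul, ← hdM]; exact hW
  have hd2 : π ^ 2 ∣ (η : 𝓞 K) ^ d - 1 := NW_lemA π _ hπ hπd M hπM hW2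
  obtain ⟨k, hk⟩ := hdn
  calc π ^ 2 ∣ (η : 𝓞 K) ^ d - 1 := hd2
    _ ∣ ((η : 𝓞 K) ^ d) ^ k - 1 ^ k := sub_dvd_pow_sub_pow _ 1 k
    _ = (η : 𝓞 K) ^ n - 1 := by rw [one_pow, ← pow_mul, ← hk]

/-! ### Finite places -/

lemma NW_absNorm_two_le (v : HeightOneSpectrum (𝓞 K)) : 2 ≤ Ideal.absNorm v.asIdeal := by
  rcases Nat.lt_or_ge (Ideal.absNorm v.asIdeal) 2 with h | h
  · interval_cases h' : Ideal.absNorm v.asIdeal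
    · exact absurd (Ideal.absNorm_eq_zero_iff.mp h') v.ne_bot
    · exact absurd (Ideal.absNorm_eq_one_iff.mp h') v.isPrime.ne_top
  · exact h

lemma NW_normAtFin_le_one (v : HeightOneSpectrum (𝓞 K)) (y : 𝓞 K) (hy : y ≠ 0) :
    normAtFin K v (algebraMap (𝓞 K) K y) ≤ 1 := by
  rw [normAtFin]
  split_ifs with h
  · norm_num
  · have hval : v.valuation K (algebraMap (𝓞 K) K y) = v.intValuationDef y := by
      rw [IsDedekindDomain.HeightOneSpectrum.valuation_of_algebraMap,
        IsDedekindDomain.HeightOneSpectrum.intValuation_apply]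
    have hle : (WithZero.unzero h : Multiplicative ℤ) ≤ 1 := by
      rw [← WithZero.coe_le_coe, WithZero.coe_unzero, WithZero.coe_one, hval]
      exact v.intValuation_le_one y
    have hta : Multiplicative.toAdd (WithZero.unzero h) ≤ 0 := hle
    refine zpow_le_one_of_nonpos₀ ?_ hta
    have h2 : (2:ℝ) ≤ (Ideal.absNorm v.asIdeal : ℝ) := by exact_mod_cast NW_absNorm_two_le v
    linarith

lemma NW_normAtFin_eq_one_iff (v : HeightOneSpectrum (𝓞 K)) (y : 𝓞 K) (hy : y ≠ 0) :
    normAtFin K v (algebraMap (𝓞 K) K y) = 1 ↔ ¬ v.asIdeal ∣ Ideal.span {y} := by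
  have hval : v.valuation K (algebraMap (𝓞 K) K y) = v.intValuationDef y := by
    rw [IsDedekindDomain.HeightOneSpectrum.valuation_of_algebraMap,
      IsDedekindDomain.HeightOneSpectrum.intValuation_apply]
  have h : v.valuation K (algebraMap (𝓞 K) K y) ≠ 0 := by
    rw [hval]; exact v.intValuation_ne_zero y hy
  rw [normAtFin, dif_neg h]
  have hN1 : (1 : ℝ) < (Ideal.absNorm v.asIdeal : ℝ) := by
    have h2 : (2:ℝ) ≤ (Ideal.absNorm v.asIdeal : ℝ) := by exact_mod_cast NW_absNorm_two_le v
    linarith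
  constructor
  · intro heq
    have hk : Multiplicative.toAdd (WithZero.unzero h) = 0 :=
      zpow_right_injective₀ (by positivity) hN1.ne' (heq.trans (zpow_zero _).symm)
    have hu1 : (WithZero.unzero h : Multiplicative ℤ) = 1 :=
      Multiplicative.toAdd.injective (a₁ := WithZero.unzero h) (a₂ := 1) (by simpa using hk)
    have hval1 : v.intValuationDef y = 1 := by
      rw [← hval, ← WithZero.coe_unzero h, hu1, WithZero.coe_one]
    rw [← IsDedekindDomain.HeightOneSpectrum.intValuation_lt_one_iff_dvd,
      IsDedekindDomain.HeightOneSpectrum.intValuation_apply, hval1]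
    exact lt_irrefl 1
  · intro hnd
    have hlt := (not_iff_not.mpr (v.intValuation_lt_one_iff_dvd y)).mpr hnd
    have hle := v.intValuation_le_one y
    have hval1 : v.intValuationDef y = 1 := le_antisymm hle (not_lt.mp hlt)
    have hu1 : (WithZero.unzero h : Multiplicative ℤ) = 1 := by
      rw [← WithZero.coe_inj, WithZero.coe_unzero, WithZero.coe_one, hval, hval1]
    rw [hu1]
    simp

lemma NW_normAtFin_unit (v : HeightOneSpectrum (𝓞 K)) (u : (𝓞 K)ˣ) :
    normAtFin K v (algebraMap (𝓞 K) K (u : 𝓞 K)) = 1 := by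
  rw [NW_normAtFin_eq_one_iff v _ u.ne_zero]
  intro hdvd
  have hle : Ideal.span {(u : 𝓞 K)} ≤ v.asIdeal := Ideal.le_of_dvd hdvd
  have htop : Ideal.span {(u : 𝓞 K)} = ⊤ := Ideal.span_singleton_eq_top.mpr u.isUnit
  rw [htop, top_le_iff] at hle
  exact v.isPrime.ne_top hle

lemma NW_norm_b (v : HeightOneSpectrum (𝓞 K)) : normAtFin K v (-1 : K) = 1 := by
  have h : (-1 : K) = algebraMap (𝓞 K) K ((-1 : (𝓞 K)ˣ) : 𝓞 K) := by simp
  rw [h, NW_normAtFin_unit]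

lemma NW_norm_c_iff (ε : (𝓞 K)ˣ) (hm : (ε : 𝓞 K) - 1 ≠ 0) (v : HeightOneSpectrum (𝓞 K)) :
    normAtFin K v (1 - algebraMap (𝓞 K) K (ε : 𝓞 K)) = 1
      ↔ ¬ v.asIdeal ∣ Ideal.span {(ε : 𝓞 K) - 1} := by
  have h : (1 - algebraMap (𝓞 K) K (ε : 𝓞 K)) = algebraMap (𝓞 K) K (1 - (ε : 𝓞 K)) := by
    simp [map_sub]
  rw [h, NW_normAtFin_eq_one_iff v _ (by intro hh; apply hm; linear_combination -hh)]
  have h2 : Ideal.span {1 - (ε : 𝓞 K)} = Ideal.span {(ε : 𝓞 K) - 1} := by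
    rw [show (1 - (ε : 𝓞 K)) = -((ε : 𝓞 K) - 1) by ring, Ideal.span_singleton_neg]
  rw [h2]

lemma NW_radK_eq (ε : (𝓞 K)ˣ) (hm : (ε : 𝓞 K) - 1 ≠ 0) :
    radK K (algebraMap (𝓞 K) K (ε : 𝓞 K)) (-1) (1 - algebraMap (𝓞 K) K (ε : 𝓞 K)) =
      ((∏ v ∈ (Ideal.finite_factors (I := Ideal.span {(ε : 𝓞 K) - 1})
          (by simpa [Ideal.span_singleton_eq_bot] using hm)).toFinset,
        (Ideal.absNorm v.asIdeal) ^ (ramIdxOverQ K v) : ℕ) : ℝ) := by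
  have hcond : ∀ v : HeightOneSpectrum (𝓞 K),
      (normAtFin K v (algebraMap (𝓞 K) K (ε : 𝓞 K)) = normAtFin K v (-1 : K) ∧
        normAtFin K v (-1 : K) = normAtFin K v (1 - algebraMap (𝓞 K) K (ε : 𝓞 K)))
      ↔ ¬ v.asIdeal ∣ Ideal.span {(ε : 𝓞 K) - 1} := by
    intro v
    rw [NW_normAtFin_unit, NW_norm_b, ← NW_norm_c_iff ε hm v]
    constructor
    · rintro ⟨-, h⟩; exact h.symm
    · intro h; exact ⟨rfl, h.symm⟩
  rw [radK]
  rw [finprod_congr (fun v => if_congr (hcond v) rfl rfl)]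
  rw [finprod_eq_prod_of_mulSupport_subset _
    (s := (Ideal.finite_factors (I := Ideal.span {(ε : 𝓞 K) - 1})
          (by simpa [Ideal.span_singleton_eq_bot] using hm)).toFinset)]
  · push_cast
    refine Finset.prod_congr rfl fun v hv => ?_
    rw [Set.Finite.mem_toFinset] at hv
    rw [if_neg (by simpa using hv)]
  · intro v hv
    rw [Function.mem_mulSupport] at hv
    rw [Set.Finite.coe_toFinset]
    by_contra h
    exact hv (if_pos (by simpa using h))

/-! ### Height bounds -/

lemma NW_normAtInf_b (w : InfinitePlace K) : normAtInf K w (-1 : K) = 1 := by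
  have h : w (-1 : K) = w (1 : K) := w.1.map_neg 1
  rw [normAtInf, h, map_one, one_pow]

lemma NW_heightK_finpart (ε : (𝓞 K)ˣ) (hm : (ε : 𝓞 K) - 1 ≠ 0) :
    (∏ᶠ v : HeightOneSpectrum (𝓞 K),
      max (max (normAtFin K v (algebraMap (𝓞 K) K (ε : 𝓞 K))) (normAtFin K v (-1 : K)))
        (normAtFin K v (1 - algebraMap (𝓞 K) K (ε : 𝓞 K)))) = 1 := by
  have h : ∀ v : HeightOneSpectrum (𝓞 K),
      max (max (normAtFin K v (algebraMap (𝓞 K) K (ε : 𝓞 K))) (normAtFin K v (-1 : K)))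
        (normAtFin K v (1 - algebraMap (𝓞 K) K (ε : 𝓞 K))) = 1 := by
    intro v
    rw [NW_normAtFin_unit, NW_norm_b, max_self]
    have hc : (1 - algebraMap (𝓞 K) K (ε : 𝓞 K)) = algebraMap (𝓞 K) K (1 - (ε : 𝓞 K)) := by
      simp [map_sub]
    rw [hc]
    rw [max_eq_left (NW_normAtFin_le_one v _ (by intro hh; apply hm; linear_combination -hh))]
  rw [finprod_congr h, finprod_one]

lemma NW_heightK_ge (ε : (𝓞 K)ˣ) (hm : (ε : 𝓞 K) - 1 ≠ 0) (w₀ : InfinitePlace K)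
    (h1 : 1 ≤ w₀ (algebraMap (𝓞 K) K (ε : 𝓞 K))) :
    w₀ (algebraMap (𝓞 K) K (ε : 𝓞 K)) ≤
      heightK K (algebraMap (𝓞 K) K (ε : 𝓞 K)) (-1) (1 - algebraMap (𝓞 K) K (ε : 𝓞 K)) := by
  rw [heightK, NW_heightK_finpart ε hm, one_mul]
  set f : InfinitePlace K → ℝ := fun w =>
    max (max (normAtInf K w (algebraMap (𝓞 K) K (ε : 𝓞 K))) (normAtInf K w (-1 : K)))
      (normAtInf K w (1 - algebraMap (𝓞 K) K (ε : 𝓞 K))) with hf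
  have hge1 : ∀ w : InfinitePlace K, 1 ≤ f w := by
    intro w
    refine le_trans ?_ (le_max_left _ _)
    refine le_trans ?_ (le_max_right _ _)
    rw [NW_normAtInf_b]
  have hw₀ : w₀ (algebraMap (𝓞 K) K (ε : 𝓞 K)) ≤ f w₀ := by
    refine le_trans ?_ ((le_max_left _ _).trans (le_max_left _ _))
    rw [normAtInf]
    exact le_self_pow₀ h1 (by have := w₀.mult_pos; omega)
  calc w₀ (algebraMap (𝓞 K) K (ε : 𝓞 K)) ≤ f w₀ := hw₀
    _ ≤ ∏ w : InfinitePlace K, f w := by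
        rw [← Finset.mul_prod_erase Finset.univ f (Finset.mem_univ w₀)]
        nth_rewrite 1 [← mul_one (f w₀)]
        refine mul_le_mul_of_nonneg_left ?_ (le_trans zero_le_one (hge1 w₀))
        exact NW_one_le_prod_real fun w _ => hge1 w

/-! ### Archimedean bound on the norm -/

lemma NW_psi_isReal (η : (𝓞 K)ˣ) (ψ : K →+* ℂ)
    (hη : 1 < ‖ψ (algebraMap (𝓞 K) K (η : 𝓞 K))‖)
    (hconj : ∀ σ : K →+* ℂ, σ ≠ ψ → ‖σ (algebraMap (𝓞 K) K (η : 𝓞 K))‖ < 1) :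
    ComplexEmbedding.IsReal ψ := by
  rw [ComplexEmbedding.isReal_iff]
  by_contra h
  have := hconj (ComplexEmbedding.conjugate ψ) h
  rw [ComplexEmbedding.conjugate_coe_eq, Complex.norm_conj] at this
  linarith

lemma NW_mult_le_two (w : InfinitePlace K) : w.mult ≤ 2 := by
  rw [InfinitePlace.mult]; split_ifs <;> norm_num

lemma NW_Nm_cast (x : 𝓞 K) :
    ((absNormElem K x : ℕ) : ℝ) = ∏ w : InfinitePlace K, (w (algebraMap (𝓞 K) K x)) ^ w.mult := by
  rw [InfinitePlace.prod_eq_abs_norm, absNormElem]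
  rw [show ((Algebra.norm ℚ) (algebraMap (𝓞 K) K x)) = ((Algebra.norm ℤ x : ℤ) : ℚ) from
    (Algebra.coe_norm_int x).symm]
  push_cast [Nat.cast_natAbs]
  norm_num

lemma NW_Nm_le (η : (𝓞 K)ˣ) (ψ : K →+* ℂ)
    (hη : 1 < ‖ψ (algebraMap (𝓞 K) K (η : 𝓞 K))‖)
    (hconj : ∀ σ : K →+* ℂ, σ ≠ ψ → ‖σ (algebraMap (𝓞 K) K (η : 𝓞 K))‖ < 1)
    (n : ℕ) :
    ((absNormElem K ((η : 𝓞 K) ^ n - 1) : ℕ) : ℝ) ≤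
      2 * (‖ψ (algebraMap (𝓞 K) K (η : 𝓞 K))‖) ^ n *
        4 ^ (Fintype.card (InfinitePlace K)) := by
  set r : ℝ := ‖ψ (algebraMap (𝓞 K) K (η : 𝓞 K))‖ with hr
  set a : K := algebraMap (𝓞 K) K ((η : 𝓞 K)) with ha
  set x : K := algebraMap (𝓞 K) K ((η : 𝓞 K) ^ n - 1) with hx
  have hxa : x = a ^ n + (-1 : K) := by rw [hx, ha]; push_cast [map_sub, map_pow]; ring
  set w₀ : InfinitePlace K := InfinitePlace.mk ψ with hw₀
  have hw₀a : w₀ a = r := by rw [hw₀, InfinitePlace.apply]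
  have hrealw : w₀.IsReal := InfinitePlace.isReal_mk_iff.mpr (NW_psi_isReal η ψ hη hconj)
  have hmult : w₀.mult = 1 := by rw [InfinitePlace.mult, if_pos hrealw]
  have hr1 : (1 : ℝ) ≤ r := le_of_lt hη
  have hbound0 : w₀ x ≤ 2 * r ^ n := by
    calc w₀ x ≤ w₀ (a ^ n) + w₀ (-1 : K) := by rw [hxa]; exact w₀.1.add_le _ _
      _ = r ^ n + 1 := by
          rw [map_pow, hw₀a]
          have h4 : w₀ (-1 : K) = w₀ (1 : K) := w₀.1.map_neg 1
          rw [h4, map_one]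
      _ ≤ 2 * r ^ n := by
          have h1 : (1:ℝ) ≤ r ^ n := one_le_pow₀ hr1
          linarith
  have hboundw : ∀ w : InfinitePlace K, w ≠ w₀ → (w x) ^ w.mult ≤ 4 := by
    intro w hw
    have hemb : w.embedding ≠ ψ := by
      intro h
      apply hw
      rw [← InfinitePlace.mk_embedding w, h, hw₀]
    have hwa : w a < 1 := by
      rw [← InfinitePlace.mk_embedding w, InfinitePlace.apply]
      exact hconj _ hemb
    have hwx : w x ≤ 2 := by
      calc w x ≤ w (a ^ n) + w (-1 : K) := by rw [hxa]; exact w.1.add_le _ _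
        _ ≤ 1 + 1 := by
            rw [map_pow]
            have h1 : w a ≥ 0 := w.1.nonneg a
            have h2 : (w a) ^ n ≤ 1 := pow_le_one₀ h1 (le_of_lt hwa)
            have h3 : w (-1 : K) = w (1 : K) := w.1.map_neg 1
            rw [h3, map_one]
            linarith
        _ = 2 := by norm_num
    calc (w x) ^ w.mult ≤ 2 ^ w.mult := pow_le_pow_left₀ (w.1.nonneg x) hwx _
      _ ≤ 2 ^ 2 := pow_le_pow_right₀ (by norm_num) (NW_mult_le_two w)
      _ = 4 := by norm_num
  rw [NW_Nm_cast]
  rw [← Finset.mul_prod_erase Finset.univ _ (Finset.mem_univ w₀)]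
  have hprod : ∏ w ∈ Finset.univ.erase w₀, (w x) ^ w.mult ≤
      4 ^ (Fintype.card (InfinitePlace K)) := by
    calc ∏ w ∈ Finset.univ.erase w₀, (w x) ^ w.mult
        ≤ ∏ _w ∈ Finset.univ.erase w₀, (4:ℝ) := by
          refine Finset.prod_le_prod (fun w _ => by positivity)
            (fun w hw => hboundw w (Finset.ne_of_mem_erase hw))
      _ = 4 ^ (Finset.univ.erase w₀).card := by rw [Finset.prod_const]
      _ ≤ 4 ^ (Fintype.card (InfinitePlace K)) := by
          refine pow_le_pow_right₀ (by norm_num) ?_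
          exact (Finset.card_erase_of_mem (Finset.mem_univ w₀)).le.trans (by simp)
  calc (w₀ x) ^ w₀.mult * ∏ w ∈ Finset.univ.erase w₀, (w x) ^ w.mult
      ≤ (2 * r ^ n) * (4 ^ (Fintype.card (InfinitePlace K))) := by
        refine mul_le_mul ?_ hprod (Finset.prod_nonneg fun w _ => by positivity) (by positivity)
        rw [hmult, pow_one]; exact hbound0
    _ = 2 * r ^ n * 4 ^ (Fintype.card (InfinitePlace K)) := by ring

/-! ### Ramification bound -/

lemma NW_different_ne_bot : differentIdeal ℤ (𝓞 K) ≠ ⊥ := by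
  have hh := coeIdeal_differentIdeal ℤ ℚ K (𝓞 K)
  intro h
  rw [h] at hh
  simp only [FractionalIdeal.coeIdeal_bot] at hh
  have h2 : FractionalIdeal.dual ℤ ℚ (1 : FractionalIdeal (𝓞 K)⁰ K) ≠ 0 :=
    FractionalIdeal.dual_ne_zero ℤ ℚ one_ne_zero
  rw [eq_comm, inv_eq_zero (G₀ := FractionalIdeal (𝓞 K)⁰ K)] at hh
  exact h2 hh

lemma NW_ram_le_one (v : HeightOneSpectrum (𝓞 K)) (h : ¬ v.asIdeal ∣ differentIdeal ℤ (𝓞 K)) :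
    ramIdxOverQ K v ≤ 1 := by
  by_contra h2
  push_neg at h2
  apply h
  set p := Ideal.comap (algebraMap ℤ (𝓞 K)) v.asIdeal with hp
  have hN : Ideal.absNorm v.asIdeal ≠ 0 := by simpa [Ideal.absNorm_eq_zero_iff] using v.ne_bot
  have hpbot : p ≠ ⊥ := by
    intro hb
    have hmem : ((Ideal.absNorm v.asIdeal : ℤ)) ∈ p := by
      simp only [hp, Ideal.mem_comap, map_intCast]
      exact_mod_cast Ideal.absNorm_mem v.asIdeal
    rw [hb] at hmem
    simp only [Ideal.mem_bot] at hmem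
    exact_mod_cast hN (by exact_mod_cast hmem)
  haveI : p.IsPrime := Ideal.IsPrime.comap _
  haveI : p.IsMaximal := Ideal.IsPrime.isMaximal inferInstance hpbot
  have hdvd : v.asIdeal ^ 2 ∣ Ideal.map (algebraMap ℤ (𝓞 K)) p :=
    Ideal.dvd_iff_le.mpr (Ideal.le_pow_of_le_ramificationIdx h2)
  have h3 := pow_sub_one_dvd_differentIdeal ℤ v.asIdeal 2 hpbot hdvd
  simpa using h3

variable (K) in
/-- The constant `D_K`, the contribution of ramified primes to the radical. -/
noncomputable def NW_DK : ℕ :=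
  ∏ v ∈ (Ideal.finite_factors (NW_different_ne_bot (K := K))).toFinset,
    (Ideal.absNorm v.asIdeal) ^ (ramIdxOverQ K v)

lemma NW_prod_primes_sq_dvd (t : Finset (HeightOneSpectrum (𝓞 K))) (I : Ideal (𝓞 K))
    (h : ∀ v ∈ t, v.asIdeal ^ 2 ∣ I) : ∏ v ∈ t, v.asIdeal ^ 2 ∣ I := by
  refine Finset.prod_dvd_of_coprime ?_ h
  intro v hv w hw hvw
  have hne : v.asIdeal ≠ w.asIdeal := fun hh => hvw (HeightOneSpectrum.ext hh)
  have hvm : v.asIdeal.IsMaximal := Ring.DimensionLEOne.maximalOfPrime v.ne_bot v.isPrime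
  have hwm : w.asIdeal.IsMaximal := Ring.DimensionLEOne.maximalOfPrime w.ne_bot w.isPrime
  have hcop : IsCoprime v.asIdeal w.asIdeal :=
    Ideal.isCoprime_iff_sup_eq.mpr (Ideal.IsMaximal.coprime_of_ne hvm hwm hne)
  exact hcop.pow

lemma NW_rad_bound_nat (m : 𝓞 K) (hm : m ≠ 0)
    (hsq : ∀ v : HeightOneSpectrum (𝓞 K), v.asIdeal ∣ Ideal.span {m} →
      v.asIdeal ^ 2 ∣ Ideal.span {m}) :
    (∏ v ∈ (Ideal.finite_factors (I := Ideal.span {m})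
        (by simpa [Ideal.span_singleton_eq_bot] using hm)).toFinset,
      (Ideal.absNorm v.asIdeal) ^ (ramIdxOverQ K v)) ^ 2 ≤ (NW_DK K) ^ 2 * absNormElem K m := by
  set s := (Ideal.finite_factors (I := Ideal.span {m})
      (by simpa [Ideal.span_singleton_eq_bot] using hm)).toFinset with hs
  set tT := (Ideal.finite_factors (NW_different_ne_bot (K := K))).toFinset with htT
  set p : HeightOneSpectrum (𝓞 K) → Prop := fun v => v.asIdeal ∣ differentIdeal ℤ (𝓞 K) with hpdef
  have hsplit : (∏ v ∈ s, (Ideal.absNorm v.asIdeal) ^ (ramIdxOverQ K v)) =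
      (∏ v ∈ s.filter p, (Ideal.absNorm v.asIdeal) ^ (ramIdxOverQ K v)) *
      (∏ v ∈ s.filter (fun v => ¬ p v), (Ideal.absNorm v.asIdeal) ^ (ramIdxOverQ K v)) :=
    (Finset.prod_filter_mul_prod_filter_not s p _).symm
  have h1 : (∏ v ∈ s.filter p, (Ideal.absNorm v.asIdeal) ^ (ramIdxOverQ K v)) ≤ NW_DK K := by
    rw [NW_DK, ← htT]
    refine Finset.prod_le_prod_of_subset_of_one_le' ?_ (fun v _ _ => Nat.one_le_iff_ne_zero.mpr ?_)
    · intro v hv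
      rw [Finset.mem_filter] at hv
      rw [htT, Set.Finite.mem_toFinset]
      exact hv.2
    · refine pow_ne_zero _ ?_
      simpa [Ideal.absNorm_eq_zero_iff] using v.ne_bot
  set Q := ∏ v ∈ s.filter (fun v => ¬ p v), Ideal.absNorm v.asIdeal with hQ
  have h2 : (∏ v ∈ s.filter (fun v => ¬ p v), (Ideal.absNorm v.asIdeal) ^ (ramIdxOverQ K v))
      ≤ Q := by
    rw [hQ]
    refine Finset.prod_le_prod' fun v hv => ?_
    rw [Finset.mem_filter] at hv
    have he : ramIdxOverQ K v ≤ 1 := NW_ram_le_one v hv.2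
    have hN1 : 1 ≤ Ideal.absNorm v.asIdeal := Nat.one_le_iff_ne_zero.mpr (by
      simpa [Ideal.absNorm_eq_zero_iff] using v.ne_bot)
    interval_cases h : ramIdxOverQ K v
    · simpa using hN1
    · simp
  have h3 : Q ^ 2 ≤ absNormElem K m := by
    have hdvd : ∏ v ∈ s.filter (fun v => ¬ p v), v.asIdeal ^ 2 ∣ Ideal.span {m} := by
      refine NW_prod_primes_sq_dvd _ _ fun v hv => ?_
      rw [Finset.mem_filter, hs, Set.Finite.mem_toFinset] at hv
      exact hsq v hv.1
    have hmap := map_dvd Ideal.absNorm hdvd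
    rw [map_prod] at hmap
    simp only [map_pow] at hmap
    rw [Finset.prod_pow, Ideal.absNorm_span_singleton] at hmap
    have habs : absNormElem K m ≠ 0 := by
      rw [absNormElem, ← Ideal.absNorm_span_singleton]
      simpa [Ideal.absNorm_eq_zero_iff, Ideal.span_singleton_eq_bot] using hm
    exact Nat.le_of_dvd (Nat.pos_of_ne_zero habs) hmap
  calc (∏ v ∈ s, (Ideal.absNorm v.asIdeal) ^ (ramIdxOverQ K v)) ^ 2
      ≤ (NW_DK K * Q) ^ 2 := by
        rw [hsplit]
        exact Nat.pow_le_pow_left (Nat.mul_le_mul h1 h2) 2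
    _ = NW_DK K ^ 2 * Q ^ 2 := by ring
    _ ≤ NW_DK K ^ 2 * absNormElem K m := Nat.mul_le_mul_left _ h3

/-- **Non-Wieferich primes in number fields.**
Let `K` be a number field of class number one satisfying the abc conjecture, and let `η`
be a unit of `𝓞 K` such that, for a fixed embedding `ψ : K → ℂ` (thought of as the identity
embedding, so that `ψ η = η^(1)`), `|η| > 1` and `|η^(j)| < 1` for all conjugates `η^(j)`
of `η` with `j ≠ 1`. Then there are infinitely many non-Wieferich primes with respect to
the base `η`, i.e. the set of prime elements `π` of `𝓞 K` with
`η^(N(π)−1) ≢ 1 (mod π²)` is infinite. -/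
theorem infinitely_many_nonWieferich_primes_number_field
    (hclass : NumberField.classNumber K = 1)
    (habc : AbcConjecture K)
    (η : (𝓞 K)ˣ) (ψ : K →+* ℂ)
    (hη : 1 < ‖ψ (algebraMap (𝓞 K) K (η : 𝓞 K))‖)
    (hconj : ∀ σ : K →+* ℂ, σ ≠ ψ →
      ‖σ (algebraMap (𝓞 K) K (η : 𝓞 K))‖ < 1) :
    {π : 𝓞 K | Prime π ∧
      ¬ (π ^ 2 ∣ (η : 𝓞 K) ^ (absNormElem K π - 1) - 1)}.Infinite := by
  haveI hPID : IsPrincipalIdealRing (𝓞 K) := NumberField.classNumber_eq_one_iff.mp hclass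
  set r : ℝ := ‖ψ (algebraMap (𝓞 K) K (η : 𝓞 K))‖ with hrdef
  have hr : 1 < r := hη
  have hFpow : ∀ k : ℕ, ‖ψ (algebraMap (𝓞 K) K ((η : 𝓞 K) ^ k))‖ = r ^ k := by
    intro k
    rw [map_pow, map_pow, norm_pow, hrdef]
  have hunitnorm : ((Algebra.norm ℤ) ((η : 𝓞 K))).natAbs = 1 := by
    have h : IsUnit ((Algebra.norm ℤ) (η : 𝓞 K)) := η.isUnit.map (Algebra.norm ℤ)
    rcases Int.isUnit_iff.mp h with h1 | h1 <;> simp [h1]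
  by_contra hinf
  rw [Set.not_infinite] at hinf
  -- Step 1: assuming finiteness of the set above, every prime is a Wieferich prime.
  have hall : ∀ π : 𝓞 K, Prime π → π ^ 2 ∣ (η : 𝓞 K) ^ (absNormElem K π - 1) - 1 := by
    intro π hπ
    by_contra hW
    refine hinf.not_infinite (Set.infinite_of_injective_forall_mem
      (f := fun k : ℕ => (η : 𝓞 K) ^ k * π) ?_ ?_)
    · -- injectivity
      intro k l hkl
      have hc : (η : 𝓞 K) ^ k = (η : 𝓞 K) ^ l := mul_right_cancel₀ hπ.ne_zero hkl
      have hF : r ^ k = r ^ l := by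
        rw [← hFpow k, ← hFpow l, hc]
      by_contra hne
      rcases Nat.lt_or_ge k l with h | h
      · exact absurd hF (ne_of_lt (pow_lt_pow_right₀ hr h))
      · have h2 : l < k := by omega
        exact absurd hF.symm (ne_of_lt (pow_lt_pow_right₀ hr h2))
    · -- membership
      intro k
      have hassoc : Associated π ((η : 𝓞 K) ^ k * π) :=
        ⟨η ^ k, by rw [Units.val_pow_eq_pow_val]; ring⟩
      have hprime : Prime ((η : 𝓞 K) ^ k * π) := hassoc.prime hπ
      have hnormeq : absNormElem K ((η : 𝓞 K) ^ k * π) = absNormElem K π := by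
        rw [absNormElem, absNormElem, map_mul, map_pow, Int.natAbs_mul, Int.natAbs_pow,
          hunitnorm, one_pow, one_mul]
      refine ⟨hprime, ?_⟩
      rw [hnormeq]
      intro hdvd
      apply hW
      have hrw : ((η : 𝓞 K) ^ k * π) ^ 2 =
          ((η ^ (2 * k) : (𝓞 K)ˣ) : 𝓞 K) * π ^ 2 := by
        rw [Units.val_pow_eq_pow_val, mul_pow, ← pow_mul, Nat.mul_comm k 2]
      rw [hrw, Units.mul_left_dvd] at hdvd
      exact hdvd
  -- Step 2: the abc-based contradiction.
  obtain ⟨C, hC0, hCb⟩ := habc (1/2) (by norm_num)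
  have hDK1 : (1 : ℝ) ≤ (NW_DK K : ℝ) := by
    have h : NW_DK K ≠ 0 := by
      rw [NW_DK]
      refine Finset.prod_ne_zero_iff.mpr fun v _ => pow_ne_zero _ ?_
      simpa [Ideal.absNorm_eq_zero_iff] using v.ne_bot
    exact_mod_cast Nat.one_le_iff_ne_zero.mpr h
  set B : ℝ := (NW_DK K : ℝ) ^ 2 * (2 * 4 ^ (Fintype.card (InfinitePlace K))) with hB
  have hB0 : 0 < B := by positivity
  set E : ℝ := C ^ 4 * B ^ 3 with hE
  obtain ⟨n₀, hn₀⟩ := pow_unbounded_of_one_lt E hr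
  set N : ℕ := n₀ + 1 with hN
  have hEN : E < r ^ N := lt_trans hn₀ (pow_lt_pow_right₀ hr (Nat.lt_succ_self n₀))
  -- setup of the abc triple for exponent N
  have hmN : (η : 𝓞 K) ^ N - 1 ≠ 0 := by
    intro h
    have h1 : (η : 𝓞 K) ^ N = 1 := by linear_combination h
    have h2 : r ^ N = 1 := by
      rw [← hFpow N, h1, map_one, map_one, norm_one]
    exact absurd h2 (ne_of_gt (one_lt_pow₀ hr (by omega)))
  set ε : (𝓞 K)ˣ := η ^ N with hεdef
  have hεv : (ε : 𝓞 K) = (η : 𝓞 K) ^ N := Units.val_pow_eq_pow_val η N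
  have hm' : (ε : 𝓞 K) - 1 ≠ 0 := by rw [hεv]; exact hmN
  set a : K := algebraMap (𝓞 K) K (ε : 𝓞 K) with ha
  have ha0 : a ≠ 0 := by
    rw [ha]; simpa using ε.ne_zero
  have hb0 : (-1 : K) ≠ 0 := by norm_num
  have hc0 : (1 : K) - a ≠ 0 := by
    have h : (1 : K) - a = - algebraMap (𝓞 K) K ((ε : 𝓞 K) - 1) := by
      rw [ha, map_sub, map_one]; ring
    rw [h, neg_ne_zero]
    intro hh
    exact hm' ((map_eq_zero_iff _ (IsFractionRing.injective (𝓞 K) K)).mp hh)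
  have hsum : a + (-1) + (1 - a) = 0 := by ring
  -- height lower bound
  set w₀ : InfinitePlace K := InfinitePlace.mk ψ with hw₀
  have hw₀a : w₀ a = r ^ N := by
    rw [ha, hεv, hw₀, InfinitePlace.apply, hFpow N]
  have hheight : r ^ N ≤ heightK K a (-1) (1 - a) := by
    have h := NW_heightK_ge ε hm' w₀ (by rw [hw₀a]; exact one_le_pow₀ hr.le)
    rw [hw₀a] at h
    exact h
  -- the radical as a natural number
  set P : ℕ := ∏ v ∈ (Ideal.finite_factors (I := Ideal.span {(ε : 𝓞 K) - 1})
      (by simpa [Ideal.span_singleton_eq_bot] using hm')).toFinset,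
    (Ideal.absNorm v.asIdeal) ^ (ramIdxOverQ K v) with hP
  have hrad : radK K a (-1) (1 - a) = (P : ℝ) := NW_radK_eq ε hm'
  set X : ℝ := (P : ℝ) with hX
  have hX0 : (0 : ℝ) ≤ X := Nat.cast_nonneg _
  -- every prime ideal dividing (ε - 1) divides it at least twice
  have hsq : ∀ v : HeightOneSpectrum (𝓞 K), v.asIdeal ∣ Ideal.span {(ε : 𝓞 K) - 1} →
      v.asIdeal ^ 2 ∣ Ideal.span {(ε : 𝓞 K) - 1} := by
    intro v hv
    set π : 𝓞 K := Submodule.IsPrincipal.generator v.asIdeal with hπdef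
    have hgen : Ideal.span {π} = v.asIdeal := Ideal.span_singleton_generator _
    have hπ0 : π ≠ 0 := by
      intro h
      apply v.ne_bot
      rw [← hgen, h, Ideal.span_singleton_eq_bot]
    have hπprime : Prime π := by
      rw [← Ideal.span_singleton_prime hπ0, hgen]
      exact v.isPrime
    have hπm : π ∣ (ε : 𝓞 K) - 1 := by
      rw [← span_singleton_dvd_span_singleton_iff_dvd, hgen]
      exact hv
    have h2 : π ^ 2 ∣ (η : 𝓞 K) ^ N - 1 :=
      NW_core π hπprime η (hall π hπprime) N (by rwa [← hεv])
    rw [← hgen, Ideal.span_singleton_pow, span_singleton_dvd_span_singleton_iff_dvd]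
    rwa [hεv]
  -- the radical bound
  have hX2 : X ^ 2 ≤ B * r ^ N := by
    have hnat : P ^ 2 ≤ (NW_DK K) ^ 2 * absNormElem K ((ε : 𝓞 K) - 1) :=
      NW_rad_bound_nat ((ε : 𝓞 K) - 1) hm' hsq
    have hreal : X ^ 2 ≤ (NW_DK K : ℝ) ^ 2 * (absNormElem K ((ε : 𝓞 K) - 1) : ℝ) := by
      rw [hX]
      exact_mod_cast hnat
    have hNm : ((absNormElem K ((ε : 𝓞 K) - 1) : ℕ) : ℝ) ≤
        2 * r ^ N * 4 ^ (Fintype.card (InfinitePlace K)) := by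
      rw [hεv]
      exact NW_Nm_le η ψ hη hconj N
    calc X ^ 2 ≤ (NW_DK K : ℝ) ^ 2 * (absNormElem K ((ε : 𝓞 K) - 1) : ℝ) := hreal
      _ ≤ (NW_DK K : ℝ) ^ 2 * (2 * r ^ N * 4 ^ (Fintype.card (InfinitePlace K))) := by
          refine mul_le_mul_of_nonneg_left hNm (by positivity)
      _ = B * r ^ N := by rw [hB]; ring
  -- the abc inequality
  have habc' : r ^ N ≤ C * X ^ ((3 : ℝ)/2) := by
    have h := hCb a (-1) (1 - a) ha0 hb0 hc0 hsum
    rw [hrad] at h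
    have h32 : (1 + 1/2 : ℝ) = (3 : ℝ)/2 := by norm_num
    rw [h32] at h
    exact le_trans hheight h
  -- raise to the fourth power
  have hpow4 : (r ^ N) ^ 4 ≤ C ^ 4 * (X ^ 2) ^ 3 := by
    have h1 : (r ^ N) ^ 4 ≤ (C * X ^ ((3 : ℝ)/2)) ^ 4 :=
      pow_le_pow_left₀ (by positivity) habc' 4
    have h2 : (X ^ ((3 : ℝ)/2)) ^ (4 : ℕ) = (X ^ 2) ^ 3 := by
      rw [← Real.rpow_natCast (X ^ ((3 : ℝ)/2)) 4, ← Real.rpow_mul hX0]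
      rw [show ((3 : ℝ)/2 * ((4 : ℕ) : ℝ)) = ((6 : ℕ) : ℝ) by push_cast; norm_num]
      rw [Real.rpow_natCast]
      ring
    calc (r ^ N) ^ 4 ≤ (C * X ^ ((3 : ℝ)/2)) ^ 4 := h1
      _ = C ^ 4 * (X ^ ((3 : ℝ)/2)) ^ 4 := by ring
      _ = C ^ 4 * (X ^ 2) ^ 3 := by rw [h2]
  have hfinal : r ^ N ≤ E := by
    have hX23 : (X ^ 2) ^ 3 ≤ (B * r ^ N) ^ 3 := pow_le_pow_left₀ (by positivity) hX2 3
    have h3 : (r ^ N) ^ 4 ≤ E * (r ^ N) ^ 3 := by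
      calc (r ^ N) ^ 4 ≤ C ^ 4 * (X ^ 2) ^ 3 := hpow4
        _ ≤ C ^ 4 * (B * r ^ N) ^ 3 := by
            refine mul_le_mul_of_nonneg_left hX23 (by positivity)
        _ = E * (r ^ N) ^ 3 := by rw [hE]; ring
    have hr3 : (0 : ℝ) < (r ^ N) ^ 3 := by positivity
    nlinarith [h3, hr3]
  exact absurd hfinal (not_le.mpr hEN)
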